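/- Under the multidimensional moment-quadrature setup, for every multi-index n ∈ ℕ^d with |n| ≤ 2N−1, one has e₀ᵀ (Ĥ_1^{n_1} Ĥ_2^{n_2} ⋯ Ĥ_d^{n_d}) e₀ = ∫ x^n dμ(x), where the matrix product is taken in order of increasing coordinate index. -/

import Mathlib

open MeasureTheory Matrix Finset

/-- Under the multidimensional moment-quadrature setup, for every multi-index
`n` with `|n| ≤ 2N - 1`, one has `e₀ᵀ (Ĥ₁^{n₁} Ĥ₂^{n₂} ⋯ Ĥ_d^{n_d}) e₀ = ∫ xⁿ dμ`, the matrix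
product being taken in order of increasing coordinate index. -/
theorem moment_quadrature_operator_moments
    (d N S : ℕ) (hd : 1 ≤ d) (hN : 1 ≤ N)
    (hS : S = Nat.choose (N - 1 + d) d)
    (μ : Measure (Fin d → ℝ)) [IsProbabilityMeasure μ]
    (hmom : ∀ n : Fin d → ℕ, (∑ i, n i) ≤ 2 * N - 1 →
      Integrable (fun x => ∏ i, x i ^ n i) μ)
    (ι : Fin S → (Fin d → ℕ))
    (hι_inj : Function.Injective ι)
    (hι_deg : ∀ u, (∑ i, ι u i) ≤ N - 1)
    (hι_surj : ∀ n : Fin d → ℕ, (∑ i, n i) ≤ N - 1 → ∃ u, ι u = n)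
    (hι0 : ∀ u : Fin S, (u : ℕ) = 0 → ι u = 0)
    (G : Matrix (Fin S) (Fin S) ℝ)
    (hG : ∀ u v, G u v = ∫ x, ∏ i, x i ^ (ι u i + ι v i) ∂μ)
    (hGpd : G.PosDef)
    (L : Matrix (Fin S) (Fin S) ℝ)
    (hL_lower : ∀ u v : Fin S, u < v → L u v = 0)
    (hLLT : L * L.transpose = G)
    (H : Fin d → Matrix (Fin S) (Fin S) ℝ)
    (hH : ∀ i u v, H i u v = ∫ x, x i * ∏ j, x j ^ (ι u j + ι v j) ∂μ)
    (Hhat : Fin d → Matrix (Fin S) (Fin S) ℝ)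
    (hHhat : ∀ i, Hhat i = L⁻¹ * H i * (L.transpose)⁻¹)
    (e₀ : Fin S → ℝ)
    (he₀ : ∀ j : Fin S, e₀ j = if (j : ℕ) = 0 then (1 : ℝ) else 0) :
    ∀ n : Fin d → ℕ, (∑ i, n i) ≤ 2 * N - 1 →
      e₀ ⬝ᵥ ((((List.finRange d).map fun i => Hhat i ^ n i).prod) *ᵥ e₀)
        = ∫ x, ∏ i, x i ^ n i ∂μ := by
  classical
  -- invertibility of L
  have hGdet : G.det ≠ 0 := ne_of_gt hGpd.det_pos
  have hLdet : IsUnit L.det := by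
    apply isUnit_iff_ne_zero.mpr
    intro h
    apply hGdet
    rw [← hLLT, Matrix.det_mul, Matrix.det_transpose, h, mul_zero]
  have hLTdet : IsUnit (L.transpose).det := by rwa [Matrix.det_transpose]
  have hLinv : L⁻¹ * L = 1 := Matrix.nonsing_inv_mul L hLdet
  have hLTinv : (L.transpose)⁻¹ * L.transpose = 1 := Matrix.nonsing_inv_mul _ hLTdet
  -- the base index u₀
  have hSpos : 0 < S := by
    rw [hS]; exact Nat.choose_pos (Nat.le_add_left d _)
  set u₀ : Fin S := ⟨0, hSpos⟩ with hu₀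
  have hιu₀ : ι u₀ = 0 := hι0 u₀ rfl
  have he₀' : e₀ = Pi.single u₀ (1:ℝ) := by
    funext j
    rw [he₀]
    by_cases h : (j:ℕ) = 0
    · have hj : j = u₀ := Fin.ext h
      rw [if_pos h, hj, Pi.single_eq_same]
    · rw [if_neg h, Pi.single_eq_of_ne (fun hj => h (by rw [hj]))]
  -- monomial identity
  have hmono : ∀ (x : Fin d → ℝ) (m : Fin d → ℕ) (a : Fin d),
      (∏ j, x j ^ (m j + if j = a then 1 else 0)) = x a * ∏ j, x j ^ m j := by
    intro x m a
    rw [Finset.prod_congr rfl (fun j _ => pow_add (x j) (m j) _), Finset.prod_mul_distrib]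
    have h1 : (∏ j, x j ^ if j = a then 1 else 0) = x a := by
      rw [Finset.prod_eq_single a (fun b _ hb => by rw [if_neg hb, pow_zero])
        (by intro h; exact absurd (Finset.mem_univ a) h)]
      rw [if_pos rfl, pow_one]
    rw [h1, mul_comm]
  -- symmetry of H and Hhat
  have hHsym : ∀ a, (H a).transpose = H a := by
    intro a
    ext u v
    simp only [Matrix.transpose_apply, hH]
    congr 1
    funext x
    congr 1
    exact Finset.prod_congr rfl fun j _ => by rw [Nat.add_comm]
  have hHhatsym : ∀ a, (Hhat a).transpose = Hhat a := by
    intro a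
    rw [hHhat, Matrix.transpose_mul, Matrix.transpose_mul, hHsym,
      Matrix.transpose_nonsing_inv, Matrix.transpose_transpose,
      Matrix.transpose_nonsing_inv, Matrix.mul_assoc]
  -- core step : Hhat a applied to a row of L
  have key : ∀ (a : Fin d) (u : Fin S),
      Hhat a *ᵥ (L.transpose *ᵥ Pi.single u 1) = L⁻¹ *ᵥ (H a *ᵥ Pi.single u 1) := by
    intro a u
    rw [Matrix.mulVec_mulVec, hHhat, Matrix.mul_assoc, Matrix.mul_assoc, hLTinv,
      Matrix.mul_one, ← Matrix.mulVec_mulVec]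
  have colH : ∀ (a : Fin d) (u u' : Fin S),
      (ι u' = fun i => ι u i + if i = a then 1 else 0) →
      H a *ᵥ Pi.single u 1 = G *ᵥ Pi.single u' 1 := by
    intro a u u' hu'
    funext v
    rw [Matrix.mulVec_single_one, Matrix.mulVec_single_one]
    show H a v u = G v u'
    rw [hH, hG]
    congr 1
    funext x
    have h2 : ∀ jj, ι v jj + ι u' jj = (ι v jj + ι u jj) + if jj = a then 1 else 0 := by
      intro jj
      simp only [hu']
      exact (Nat.add_assoc _ _ _).symm
    have h3 : (∏ i, x i ^ (ι v i + ι u' i))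
        = ∏ i, x i ^ ((ι v i + ι u i) + if i = a then 1 else 0) :=
      Finset.prod_congr rfl fun jj _ => by rw [h2 jj]
    rw [h3]
    exact (hmono x (fun jj => ι v jj + ι u jj) a).symm
  have step : ∀ (a : Fin d) (u u' : Fin S),
      (ι u' = fun i => ι u i + if i = a then 1 else 0) →
      Hhat a *ᵥ (L.transpose *ᵥ Pi.single u 1) = L.transpose *ᵥ Pi.single u' 1 := by
    intro a u u' h
    rw [key, colH a u u' h, ← hLLT, Matrix.mulVec_mulVec, ← Matrix.mul_assoc,
      hLinv, Matrix.one_mul]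
  -- counting
  have sumcount : ∀ ℓ : List (Fin d), (∑ i, ℓ.count i) = ℓ.length := by
    intro ℓ
    induction ℓ with
    | nil => simp
    | cons a s IH =>
      simp only [List.count_cons, beq_iff_eq, List.length_cons]
      rw [Finset.sum_add_distrib, IH]
      congr 1
      simp
  -- iteration lemma
  have iter : ∀ (ℓ : List (Fin d)) (u : Fin S), (∑ i, ι u i) + ℓ.length + 1 ≤ N →
      ∃ u' : Fin S, (∀ i, ι u' i = ι u i + ℓ.count i) ∧
        ((ℓ.map Hhat).prod *ᵥ (L.transpose *ᵥ Pi.single u 1))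
          = L.transpose *ᵥ Pi.single u' 1 := by
    intro ℓ
    induction ℓ with
    | nil =>
      intro u _
      exact ⟨u, fun i => by simp, by simp [Matrix.one_mulVec]⟩
    | cons a s IH =>
      intro u h
      rw [List.length_cons] at h
      obtain ⟨u₁, hc₁, hv₁⟩ := IH u (by omega)
      have hs₁ : (∑ i, ι u₁ i) = (∑ i, ι u i) + s.length := by
        rw [Finset.sum_congr rfl fun i _ => hc₁ i, Finset.sum_add_distrib, sumcount]
      obtain ⟨u₂, hu₂⟩ := hι_surj (fun i => ι u₁ i + if i = a then 1 else 0) (by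
        rw [Finset.sum_add_distrib,
          Finset.sum_ite_eq' Finset.univ a (fun _ => 1), if_pos (Finset.mem_univ a)]
        omega)
      refine ⟨u₂, ?_, ?_⟩
      · intro i
        simp only [hu₂, List.count_cons, beq_iff_eq, hc₁ i]
        by_cases hia : i = a
        · simp [hia, Nat.add_assoc]
        · simp [hia, (Ne.symm hia : ¬ a = i)]
      · rw [List.map_cons, List.prod_cons, ← Matrix.mulVec_mulVec, hv₁,
          step a u₁ u₂ hu₂]
  -- main proof
  intro n hn
  set k := ∑ i, n i with hk
  set ℓ : List (Fin d) := (List.finRange d).flatMap (fun i => List.replicate (n i) i)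
    with hℓ
  have hcount : ∀ j, ℓ.count j = n j := by
    intro j
    rw [hℓ, List.count_flatMap]
    have hcf : (List.count j ∘ fun i => List.replicate (n i) i)
        = fun i => if i = j then n i else 0 := by
      funext i
      simp [Function.comp, List.count_replicate]
    rw [hcf, ← Fin.sum_univ_def]
    simp
  have hlen : ℓ.length = k := by
    rw [← sumcount ℓ]
    exact Finset.sum_congr rfl fun i _ => hcount i
  have hprodeq : ((List.finRange d).map fun i => Hhat i ^ n i).prod
      = (ℓ.map Hhat).prod := by
    rw [hℓ]
    rw [List.map_flatMap]
    simp only [List.map_replicate]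
    rw [List.flatMap_def, List.prod_flatten, List.map_map]
    congr 1
    apply List.map_congr_left
    intro i _
    simp [List.prod_replicate]
  rw [hprodeq]
  -- the constant c = L u₀ u₀
  set c : ℝ := L u₀ u₀ with hcdef
  have hrowL : ∀ v : Fin S, L u₀ v = c * (Pi.single u₀ (1:ℝ) : Fin S → ℝ) v := by
    intro v
    by_cases hv : v = u₀
    · rw [hv, Pi.single_eq_same, mul_one]
    · have : u₀ < v := by
        apply Fin.lt_def.mpr
        show 0 < (v : ℕ)
        rcases Nat.eq_zero_or_pos (v : ℕ) with h0 | h0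
        · exact absurd (Fin.ext h0 : v = u₀) hv
        · exact h0
      rw [hL_lower u₀ v this, Pi.single_eq_of_ne hv, mul_zero]
  have hconst1 : (∫ x, ∏ i, x i ^ (ι u₀ i + ι u₀ i) ∂μ) = 1 := by
    have : (fun x : Fin d → ℝ => ∏ i, x i ^ (ι u₀ i + ι u₀ i)) = fun _ => (1:ℝ) := by
      funext x
      apply Finset.prod_eq_one
      intro i _
      rw [hιu₀]
      simp
    rw [this, integral_const]
    simp
  have hc2 : c * c = 1 := by
    have h1 : (L * L.transpose) u₀ u₀ = c * c := by
      rw [Matrix.mul_apply]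
      rw [Finset.sum_eq_single u₀ (fun b _ hb => by
        have : u₀ < b := by
          apply Fin.lt_def.mpr
          show 0 < (b : ℕ)
          rcases Nat.eq_zero_or_pos (b : ℕ) with h0 | h0
          · exact absurd (Fin.ext h0 : b = u₀) hb
          · exact h0
        rw [hL_lower u₀ b this, zero_mul])
        (fun h => absurd (Finset.mem_univ u₀) h)]
      rfl
    rw [← h1, hLLT, hG, hconst1]
  have hc : L.transpose *ᵥ Pi.single u₀ 1 = c • (Pi.single u₀ 1 : Fin S → ℝ) := by
    rw [Matrix.mulVec_single_one]
    funext v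
    rw [Pi.smul_apply, smul_eq_mul]
    exact hrowL v
  have he₀c : e₀ = c • (L.transpose *ᵥ Pi.single u₀ 1) := by
    rw [hc, smul_smul, hc2, one_smul, he₀']
  -- two cases
  by_cases hk0 : k = 0
  · have hn0 : ∀ i, n i = 0 := by
      intro i
      have := Finset.sum_eq_zero_iff.mp (hk ▸ hk0 : (∑ i, n i) = 0)
      exact this i (Finset.mem_univ i)
    have hone : (ℓ.map Hhat).prod = 1 := by
      have : ℓ = [] := by
        rw [← List.length_eq_zero_iff]
        rw [hlen]; exact hk0
      rw [this]; simp
    rw [hone, Matrix.one_mulVec, he₀']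
    rw [single_dotProduct, Pi.single_eq_same, one_mul]
    have : (fun x : Fin d → ℝ => ∏ i, x i ^ n i) = fun _ => (1:ℝ) := by
      funext x
      apply Finset.prod_eq_one
      intro i _
      rw [hn0 i, pow_zero]
    rw [this, integral_const]
    simp
  · -- k ≥ 1
    have hk1 : 1 ≤ k := Nat.one_le_iff_ne_zero.mpr hk0
    set j : ℕ := k - min (k-1) (N-1) with hj
    set t : List (Fin d) := ℓ.take j with ht
    set r : List (Fin d) := ℓ.drop j with hr
    have hℓtr : ℓ = t ++ r := (List.take_append_drop j ℓ).symm
    have hrlen : r.length = min (k-1) (N-1) := by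
      rw [hr, List.length_drop, hlen]
      omega
    have htlen : t.length = j := by
      rw [ht, List.length_take, hlen]
      omega
    have htlen1 : 1 ≤ t.length := by rw [htlen]; omega
    have htlenN : t.length ≤ N := by
      rw [htlen, hj]
      omega
    -- right half
    obtain ⟨ub, hcb, hvb⟩ := iter r u₀ (by
      rw [hιu₀]
      simp only [Pi.zero_apply, Finset.sum_const_zero, zero_add]
      omega)
    -- reversed left half
    obtain ⟨a, s, hts⟩ : ∃ a s, t.reverse = a :: s := by
      rcases List.exists_cons_of_ne_nil (fun h : t.reverse = [] => by
        rw [List.reverse_eq_nil_iff] at h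
        rw [h] at htlen1
        simp at htlen1) with ⟨a, s, hs⟩
      exact ⟨a, s, hs⟩
    have hslen : s.length = t.length - 1 := by
      have := congrArg List.length hts
      rw [List.length_reverse, List.length_cons] at this
      omega
    obtain ⟨us, hcs, hvs⟩ := iter s u₀ (by
      rw [hιu₀]
      simp only [Pi.zero_apply, Finset.sum_const_zero, zero_add]
      omega)
    -- transpose of left product
    have htrans : ((t.map Hhat).prod).transpose = (t.reverse.map Hhat).prod := by
      rw [Matrix.transpose_list_prod, List.map_map, ← List.map_reverse]
      congr 1
      apply List.map_congr_left
      intro x _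
      exact hHhatsym x
    -- main computation
    rw [hℓtr, List.map_append, List.prod_append, he₀c]
    rw [Matrix.mulVec_smul, dotProduct_smul, smul_dotProduct, smul_eq_mul, smul_eq_mul,
      ← mul_assoc, hc2, one_mul]
    rw [← Matrix.mulVec_mulVec, hvb]
    rw [Matrix.dotProduct_mulVec, ← Matrix.mulVec_transpose, htrans, hts,
      List.map_cons, List.prod_cons, ← Matrix.mulVec_mulVec, hvs]
    have hus' : ι us = fun i => ι us i := rfl
    rw [key a us]
    -- now : (L⁻¹ *ᵥ (H a *ᵥ single us 1)) ⬝ᵥ (Lᵀ *ᵥ single ub 1)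
    rw [dotProduct_comm, Matrix.dotProduct_mulVec, ← Matrix.mulVec_transpose,
      Matrix.transpose_nonsing_inv, Matrix.mulVec_mulVec, hLTinv, Matrix.one_mulVec,
      single_dotProduct, one_mul, Matrix.mulVec_single_one]
    show H a ub us = _
    rw [hH]
    congr 1
    funext x
    have hnj : ∀ i, n i = (ι ub i + ι us i) + if i = a then 1 else 0 := by
      intro i
      have h1 : n i = t.count i + r.count i := by
        rw [← hcount i, hℓtr, List.count_append]
      have h2 : t.count i = s.count i + if i = a then 1 else 0 := by
        rw [← List.count_reverse, hts]
        by_cases hia : i = a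
        · subst hia; simp [List.count_cons]
        · simp [List.count_cons, hia, Ne.symm hia]
      have h3 : ι ub i = r.count i := by
        rw [hcb i, hιu₀]; simp
      have h4 : ι us i = s.count i := by
        rw [hcs i, hιu₀]; simp
      rw [h3, h4, h1, h2]
      omega
    have h5 : (∏ i, x i ^ n i)
        = ∏ i, x i ^ ((ι ub i + ι us i) + if i = a then 1 else 0) :=
      Finset.prod_congr rfl fun i _ => by rw [hnj i]
    rw [h5]
    exact (hmono x (fun i => ι ub i + ι us i) a).symm
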